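/- If A ∈ B(H) is self-adjoint and g ∈ ran A, then the inverse problem A f = g admits exactly one solution f with f ∈ closure(K(A,g)). -/

import Mathlib

open scoped InnerProductSpace

/-- Proposition 2.7: if `A` is bounded self-adjoint and `g ∈ ran A`, then the inverse
problem `A f = g` admits exactly one Krylov solution. -/
theorem stmt9 {H : Type*} [NormedAddCommGroup H] [InnerProductSpace ℂ H]
    [CompleteSpace H] (A : H →L[ℂ] H) (hA : IsSelfAdjoint A)
    (g : H) (hg : ∃ h : H, A h = g) :
    ∃! f : H, A f = g ∧
      f ∈ (Submodule.span ℂ (Set.range fun k : ℕ => (A ^ k) g)).topologicalClosure := by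
  obtain ⟨h, hh⟩ := hg
  set S : Set H := Set.range fun k : ℕ => (A ^ k) g with hS
  set K : Submodule ℂ H := (Submodule.span ℂ S).topologicalClosure with hKdef
  have hSym : ∀ x y : H, ⟪A x, y⟫_ℂ = ⟪x, A y⟫_ℂ := fun x y => hA.isSymmetric x y
  have hgK : g ∈ K := Submodule.le_topologicalClosure _
    (Submodule.subset_span ⟨0, by simp⟩)
  -- span is A-invariant
  have hmap : ∀ y ∈ Submodule.span ℂ S, A y ∈ Submodule.span ℂ S := by
    intro y hy
    have hle : Submodule.map (A : H →ₗ[ℂ] H) (Submodule.span ℂ S) ≤ Submodule.span ℂ S := by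
      rw [Submodule.map_span, Submodule.span_le]
      rintro _ ⟨_, ⟨k, rfl⟩, rfl⟩
      refine Submodule.subset_span ⟨k + 1, ?_⟩
      simp [pow_succ', ContinuousLinearMap.mul_apply]
    exact hle ⟨y, hy, rfl⟩
  -- K is A-invariant
  have hinv : ∀ x ∈ K, A x ∈ K := by
    intro x hx
    have hx' : x ∈ closure ((Submodule.span ℂ S : Submodule ℂ H) : Set H) := hx
    have : A x ∈ closure ((Submodule.span ℂ S : Submodule ℂ H) : Set H) :=
      map_mem_closure A.continuous hx' (fun y hy => hmap y hy)
    exact this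
  -- Kᗮ is A-invariant
  have hinv' : ∀ x ∈ Kᗮ, A x ∈ Kᗮ := by
    intro x hx
    rw [Submodule.mem_orthogonal]
    intro u hu
    rw [← hSym u x]  -- ⟪A u, x⟫
    exact hx (A u) (hinv u hu)
  haveI : CompleteSpace K := (Submodule.span ℂ S).isClosed_topologicalClosure.completeSpace_coe
  set f : H := (K.orthogonalProjectionOnto h : H) with hf
  have hfK : f ∈ K := (K.orthogonalProjectionOnto h).2
  have hperp : h - f ∈ Kᗮ := by
    have := K.sub_starProjection_mem_orthogonal h; rwa [Submodule.starProjection_apply] at this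
  have hAf : A f = g := by
    have h1 : A (h - f) ∈ Kᗮ := hinv' _ hperp
    have h2 : A (h - f) ∈ K := by
      have he : A (h - f) = g - A f := by rw [map_sub, hh]
      rw [he]; exact K.sub_mem hgK (hinv f hfK)
    have h0 : A (h - f) = 0 := by
      have := K.orthogonal_disjoint.le_bot ⟨h2, h1⟩
      simpa using this
    rw [map_sub, hh, sub_eq_zero] at h0
    exact h0.symm
  -- uniqueness: any Krylov solution of A f' = g equals f
  have huniq : ∀ f' : H, A f' = g → f' ∈ K → f' = f := by
    intro f' hAf' hf'K
    set d : H := f' - f with hd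
    have hdK : d ∈ K := K.sub_mem hf'K hfK
    have hAd : A d = 0 := by rw [hd, map_sub, hAf', hAf, sub_self]
    -- each generator is orthogonal to d
    have hgen : ∀ k : ℕ, ⟪d, (A ^ k) g⟫_ℂ = 0 := by
      intro k
      have hsymk : ⟪(A ^ k) d, g⟫_ℂ = ⟪d, (A ^ k) g⟫_ℂ := (hA.pow k).isSymmetric d g
      rw [← hsymk]
      cases k with
      | zero =>
        simp only [pow_zero, ContinuousLinearMap.one_apply]
        rw [← hh, ← hSym, hAd, inner_zero_left]
      | succ n =>
        have : (A ^ (n + 1)) d = 0 := by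
          rw [pow_succ, ContinuousLinearMap.mul_apply, hAd, map_zero]
        rw [this, inner_zero_left]
    -- hence K ⊆ (ℂ ∙ d)ᗮ
    have hle : K ≤ (ℂ ∙ d)ᗮ := by
      apply Submodule.topologicalClosure_minimal
      · rw [Submodule.span_le]
        rintro _ ⟨k, rfl⟩
        exact Submodule.mem_orthogonal_singleton_iff_inner_right.mpr (hgen k)
      · exact Submodule.isClosed_orthogonal _
    have : ⟪d, d⟫_ℂ = 0 :=
      Submodule.mem_orthogonal_singleton_iff_inner_right.mp (hle hdK)
    have hd0 : d = 0 := inner_self_eq_zero.mp this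
    rw [hd, sub_eq_zero] at hd0
    exact hd0
  exact ⟨f, ⟨hAf, hfK⟩, fun f' ⟨h1, h2⟩ => huniq f' h1 h2⟩
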